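/- Let p, n ≥ 1 and let W ⊆ ℂⁿ be an open set such that every a = (a_1, …, a_n) ∈ W has pairwise distinct, nonzero coordinates. Let B_1, …, B_n be holomorphic maps from W to the p×p complex matrices, set B_0 = −Σ_{j=1}^{n} B_j and C_1 = B_0 and a_0 = 0. For a ∈ W and z ∈ ℂ \ {0, a_1, …, a_n} set A(a, z) = Σ_{j=0}^{n} B_j(a) · (z − a_j)^{-1} and A_i(a, z) = −B_i(a) · (z − a_i)^{-1} for i = 1, …, n. Then the zero-curvature conditions (F1) ∂A_i/∂z − ∂A/∂a_i = A·A_i − A_i·A for every i = 1, …, n and (F2) ∂A_j/∂a_i − ∂A_i/∂a_j = A_i·A_j − A_j·A_i for all i ≠ j in {1, …, n}, holding for all a ∈ W and all z ∈ ℂ \ {0, a_1, …, a_n}, are equivalent to the ordinary Schlesinger system for B_0, B_1, …, B_n: for every i ∈ {0, 1, …, n} and m ∈ {1, …, n} with m ≠ i, ∂B_i/∂a_m = [B_i, B_m]/(a_i − a_m) (with a_0 = 0), and for every i ∈ {1, …, n}, ∂B_i/∂a_i = −Σ_{j ∈ {0,…,n}, j ≠ i} [B_i, B_j]/(a_i −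 a_j). -/

import Mathlib

open scoped BigOperators

/-- Entrywise partial derivative in the direction of the `i`-th coordinate
of a matrix-valued map on `ℂⁿ`. -/
noncomputable def pd {n p : ℕ} (i : Fin n)
    (f : (Fin n → ℂ) → Matrix (Fin p) (Fin p) ℂ) (a : Fin n → ℂ) :
    Matrix (Fin p) (Fin p) ℂ :=
  Matrix.of fun r c => fderiv ℂ (fun x => f x r c) a (Pi.single i 1)

/-- Entrywise derivative of a matrix-valued map of one complex variable. -/
noncomputable def zd {p : ℕ}
    (f : ℂ → Matrix (Fin p) (Fin p) ℂ) (z : ℂ) :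
    Matrix (Fin p) (Fin p) ℂ :=
  Matrix.of fun r c => deriv (fun w => f w r c) z

/-- The commutator of two matrices. -/
noncomputable def matComm {p : ℕ} (X Y : Matrix (Fin p) (Fin p) ℂ) : Matrix (Fin p) (Fin p) ℂ :=
  X * Y - Y * X

/-! ### Auxiliary lemmas -/

open Filter Topology ContinuousLinearMap

lemma scalar_residue {ι : Type*} [Fintype ι] [DecidableEq ι] (po : ι → ℂ)
    (hp : Function.Injective po) (f : ι → ℂ)
    (h : ∀ z : ℂ, (∀ k, z ≠ po k) → ∑ k, (z - po k)⁻¹ * f k = 0) :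
    ∀ k, f k = 0 := by
  intro k0
  have hev1 : ∀ᶠ z in 𝓝[≠] (po k0), ∀ k, z ≠ po k := by
    rw [Filter.eventually_all]
    intro k
    by_cases hk : k = k0
    · subst hk; exact eventually_mem_nhdsWithin
    · exact eventually_nhdsWithin_of_eventually_nhds
        (eventually_ne_nhds (fun e => hk (hp e).symm))
  set g : ℂ → ℂ := fun z => (z - po k0) * ∑ k, (z - po k)⁻¹ * f k with hg
  have hlim0 : Tendsto g (𝓝[≠] (po k0)) (𝓝 0) := by
    refine tendsto_const_nhds.congr' ?_
    filter_upwards [hev1] with z hz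
    simp only [hg, h z hz, mul_zero]
  have hlim1 : Tendsto g (𝓝[≠] (po k0)) (𝓝 (f k0)) := by
    have hcont : Tendsto
        (fun z => f k0 + ∑ k ∈ Finset.univ.erase k0, (z - po k0) * ((z - po k)⁻¹ * f k))
        (𝓝 (po k0)) (𝓝 (f k0)) := by
      have hterm : Tendsto
          (fun z => ∑ k ∈ Finset.univ.erase k0, (z - po k0) * ((z - po k)⁻¹ * f k))
          (𝓝 (po k0))
          (𝓝 (∑ k ∈ Finset.univ.erase k0, (po k0 - po k0) * ((po k0 - po k)⁻¹ * f k))) := by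
        refine tendsto_finset_sum _ fun k hk => ?_
        have hne : po k0 - po k ≠ 0 :=
          sub_ne_zero.2 (fun e => (Finset.mem_erase.1 hk).1 (hp e.symm))
        exact (tendsto_id.sub tendsto_const_nhds).mul
          (((tendsto_id.sub tendsto_const_nhds).inv₀ hne).mul tendsto_const_nhds)
      simpa using tendsto_const_nhds.add hterm
    refine (hcont.mono_left nhdsWithin_le_nhds).congr' ?_
    filter_upwards [eventually_mem_nhdsWithin] with z hz
    have hz0 : z - po k0 ≠ 0 := sub_ne_zero.2 hz
    simp only [hg]
    rw [← Finset.add_sum_erase _ _ (Finset.mem_univ k0), mul_add, Finset.mul_sum,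
      ← mul_assoc, mul_inv_cancel₀ hz0, one_mul]
  exact (tendsto_nhds_unique hlim0 hlim1).symm

lemma residue_extract {p n : ℕ} (a : Fin n → ℂ) (hinj : Function.Injective a)
    (h0 : ∀ j, a j ≠ 0)
    (E0 : Matrix (Fin p) (Fin p) ℂ) (E : Fin n → Matrix (Fin p) (Fin p) ℂ)
    (h : ∀ z : ℂ, z ≠ 0 → (∀ j, z ≠ a j) →
      z⁻¹ • E0 + ∑ j, (z - a j)⁻¹ • E j = 0) :
    E0 = 0 ∧ ∀ j, E j = 0 := by
  set po : Fin (n + 1) → ℂ := Fin.cons 0 a with hpo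
  have hpinj : Function.Injective po := by
    intro k l hkl
    induction k using Fin.cases with
    | zero => induction l using Fin.cases with
      | zero => rfl
      | succ l => exact absurd hkl.symm (by simpa [hpo] using h0 l)
    | succ k => induction l using Fin.cases with
      | zero => exact absurd hkl (by simpa [hpo] using h0 k)
      | succ l => exact congrArg Fin.succ (hinj (by simpa [hpo] using hkl))
  have key : ∀ r c, E0 r c = 0 ∧ ∀ j, E j r c = 0 := by
    intro r c
    have := scalar_residue po hpinj (Fin.cons (E0 r c) (fun j => E j r c)) ?_
    · exact ⟨this 0, fun j => this j.succ⟩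
    · intro z hz
      have hz0 : z ≠ 0 := by simpa [hpo] using hz 0
      have hzj : ∀ j, z ≠ a j := fun j => by simpa [hpo] using hz j.succ
      have := congrFun (congrFun (h z hz0 hzj) r) c
      simpa [hpo, Fin.sum_univ_succ, Matrix.add_apply, Matrix.smul_apply,
        Finset.sum_apply, Matrix.sum_apply, Matrix.zero_apply] using this
  constructor
  · ext r c; exact (key r c).1
  · intro j; ext r c; exact (key r c).2 j

lemma hasFDerivAt_invsub {n : ℕ} (j : Fin n) (z : ℂ) (a : Fin n → ℂ) (hz : z - a j ≠ 0) :
    HasFDerivAt (fun x : Fin n → ℂ => (z - x j)⁻¹)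
      (((z - a j) ^ 2)⁻¹ • (proj j : (Fin n → ℂ) →L[ℂ] ℂ)) a := by
  have h1 : HasFDerivAt (fun x : Fin n → ℂ => z - x j)
      (-(proj j : (Fin n → ℂ) →L[ℂ] ℂ)) a := by
    simpa using (hasFDerivAt_const z a).fun_sub ((proj j : (Fin n → ℂ) →L[ℂ] ℂ).hasFDerivAt)
  have h2 := (hasDerivAt_inv hz).comp_hasFDerivAt a h1
  have h3 : HasFDerivAt (fun x : Fin n → ℂ => (z - x j)⁻¹)
      (-((z - a j) ^ 2)⁻¹ • -(proj j : (Fin n → ℂ) →L[ℂ] ℂ)) a := h2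
  have e : (-((z - a j) ^ 2)⁻¹ • -(proj j : (Fin n → ℂ) →L[ℂ] ℂ))
      = ((z - a j) ^ 2)⁻¹ • (proj j : (Fin n → ℂ) →L[ℂ] ℂ) := by
    ext v; simp
  rw [e] at h3
  exact h3

lemma pd_apply {n p : ℕ} (i : Fin n) (f : (Fin n → ℂ) → Matrix (Fin p) (Fin p) ℂ)
    (a : Fin n → ℂ) (r c : Fin p) :
    pd i f a r c = fderiv ℂ (fun x => f x r c) a (Pi.single i 1) := rfl

lemma pd_invsub_smul {n p : ℕ} (i j : Fin n) (z : ℂ) (a : Fin n → ℂ) (hz : z - a j ≠ 0)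
    (F : (Fin n → ℂ) → Matrix (Fin p) (Fin p) ℂ)
    (hF : ∀ r c, DifferentiableAt ℂ (fun x => F x r c) a) :
    pd i (fun x => (z - x j)⁻¹ • F x) a
      = (z - a j)⁻¹ • pd i F a + (if i = j then ((z - a j) ^ 2)⁻¹ else 0) • F a := by
  ext r c
  have hF' := (hF r c).hasFDerivAt
  have h := (hasFDerivAt_invsub j z a hz).fun_mul hF'
  have heq : (fun x => ((z - x j)⁻¹ • F x) r c) = fun x => (z - x j)⁻¹ * F x r c := by
    funext x; simp [Matrix.smul_apply]
  have hd := h.fderiv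
  rw [Matrix.add_apply, Matrix.smul_apply, Matrix.smul_apply, pd_apply, pd_apply, heq, hd]
  simp only [ContinuousLinearMap.add_apply, ContinuousLinearMap.smul_apply, proj_apply,
    Pi.single_apply, smul_eq_mul]
  by_cases hij : i = j
  · subst hij; simp [mul_comm]
  · simp [hij, Ne.symm hij]

lemma pd_const_smul {n p : ℕ} (i : Fin n) (c : ℂ)
    (F : (Fin n → ℂ) → Matrix (Fin p) (Fin p) ℂ) (a : Fin n → ℂ)
    (hF : ∀ r c, DifferentiableAt ℂ (fun x => F x r c) a) :
    pd i (fun x => c • F x) a = c • pd i F a := by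
  ext r c'
  rw [Matrix.smul_apply, pd_apply, pd_apply]
  have heq : (fun x => (c • F x) r c') = fun x => c * F x r c' := by
    funext x; simp [Matrix.smul_apply]
  rw [heq, fderiv_const_mul (hF r c')]
  simp

lemma pd_add {n p : ℕ} (i : Fin n)
    (F G : (Fin n → ℂ) → Matrix (Fin p) (Fin p) ℂ) (a : Fin n → ℂ)
    (hF : ∀ r c, DifferentiableAt ℂ (fun x => F x r c) a)
    (hG : ∀ r c, DifferentiableAt ℂ (fun x => G x r c) a) :
    pd i (fun x => F x + G x) a = pd i F a + pd i G a := by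
  ext r c
  rw [Matrix.add_apply, pd_apply, pd_apply, pd_apply]
  have heq : (fun x => (F x + G x) r c) = fun x => F x r c + G x r c := by
    funext x; simp
  rw [heq, fderiv_fun_add (hF r c) (hG r c)]
  simp

lemma pd_neg {n p : ℕ} (i : Fin n)
    (F : (Fin n → ℂ) → Matrix (Fin p) (Fin p) ℂ) (a : Fin n → ℂ) :
    pd i (fun x => -F x) a = -pd i F a := by
  ext r c
  rw [Matrix.neg_apply, pd_apply, pd_apply]
  have heq : (fun x => (-F x) r c) = fun x => -(F x r c) := by
    funext x; simp
  rw [heq, fderiv_fun_neg]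
  simp

lemma pd_sum {n p : ℕ} (i : Fin n) {ι : Type*} (s : Finset ι)
    (F : ι → (Fin n → ℂ) → Matrix (Fin p) (Fin p) ℂ) (a : Fin n → ℂ)
    (hF : ∀ j ∈ s, ∀ r c, DifferentiableAt ℂ (fun x => F j x r c) a) :
    pd i (fun x => ∑ j ∈ s, F j x) a = ∑ j ∈ s, pd i (F j) a := by
  ext r c
  rw [Matrix.sum_apply, pd_apply]
  have heq : (fun x => (∑ j ∈ s, F j x) r c) = fun x => ∑ j ∈ s, F j x r c := by
    funext x; simp [Matrix.sum_apply]
  rw [heq, fderiv_fun_sum (fun j hj => hF j hj r c)]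
  simp [pd_apply]

lemma zd_neg_invsub_smul {p : ℕ} (b : ℂ) (M : Matrix (Fin p) (Fin p) ℂ) (z : ℂ)
    (hz : z - b ≠ 0) :
    zd (fun w => -((w - b)⁻¹ • M)) z = ((z - b) ^ 2)⁻¹ • M := by
  ext r c
  have h : HasDerivAt (fun w : ℂ => -((w - b)⁻¹ * M r c)) (((z - b) ^ 2)⁻¹ * M r c) z := by
    have h1 : HasDerivAt (fun w : ℂ => w - b) 1 z := (hasDerivAt_id z).sub_const b
    have h2 := (h1.inv hz).mul_const (M r c)
    have h3 := h2.fun_neg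
    have e : ((z - b) ^ 2)⁻¹ * M r c = -(-1 / (z - b) ^ 2 * M r c) := by ring
    rw [e]
    exact h3
  have heq : (fun w => (-((w - b)⁻¹ • M)) r c) = fun w : ℂ => -((w - b)⁻¹ * M r c) := by
    funext w; simp [Matrix.smul_apply]
  rw [Matrix.smul_apply, zd, Matrix.of_apply, heq, h.deriv]
  simp

lemma smul_matComm_comm {P : ℕ} (s t : ℂ) (h : s = -t) (X Y : Matrix (Fin P) (Fin P) ℂ) :
    s • matComm X Y = t • matComm Y X := by
  subst h
  rw [neg_smul, matComm, matComm, ← smul_neg, neg_sub]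

lemma inv_sub_swap (u v : ℂ) : (u - v)⁻¹ = -((v - u)⁻¹) := by
  rw [← inv_neg, neg_sub]

lemma pfrac {P n : ℕ} (a : Fin n → ℂ) (i : Fin n) (z : ℂ)
    (hz0 : z ≠ 0) (hz : ∀ j, z ≠ a j) (hai : a i ≠ 0) (hne : ∀ j, j ≠ i → a j ≠ a i)
    (C0 : Matrix (Fin P) (Fin P) ℂ) (C : Fin n → Matrix (Fin P) (Fin P) ℂ)
    (hCi : C i = 0) :
    ((z - a i)⁻¹ * z⁻¹) • C0 + ∑ j, ((z - a i)⁻¹ * (z - a j)⁻¹) • C j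
      = z⁻¹ • ((0 - a i)⁻¹ • C0)
        + ∑ j, (z - a j)⁻¹ •
          (if j = i then
            -((0 - a i)⁻¹ • C0) - ∑ k ∈ Finset.univ.erase i, (a k - a i)⁻¹ • C k
           else (a j - a i)⁻¹ • C j) := by
  have hzi : z - a i ≠ 0 := sub_ne_zero.2 (hz i)
  have h0i : (0 : ℂ) - a i ≠ 0 := by
    simpa using neg_ne_zero.2 hai
  have hL : ∑ j, ((z - a i)⁻¹ * (z - a j)⁻¹) • C j
      = ∑ j ∈ Finset.univ.erase i, ((z - a i)⁻¹ * (z - a j)⁻¹) • C j := by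
    rw [← Finset.add_sum_erase _ _ (Finset.mem_univ i), hCi, smul_zero, zero_add]
  have hR : (∑ j, (z - a j)⁻¹ •
        (if j = i then
          -((0 - a i)⁻¹ • C0) - ∑ k ∈ Finset.univ.erase i, (a k - a i)⁻¹ • C k
         else (a j - a i)⁻¹ • C j))
      = (-((z - a i)⁻¹ * (0 - a i)⁻¹) • C0
          - ∑ k ∈ Finset.univ.erase i, ((z - a i)⁻¹ * (a k - a i)⁻¹) • C k)
        + ∑ j ∈ Finset.univ.erase i, ((z - a j)⁻¹ * (a j - a i)⁻¹) • C j := by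
    rw [← Finset.add_sum_erase _ _ (Finset.mem_univ i), if_pos rfl]
    congr 1
    · rw [smul_sub, smul_neg, smul_smul, Finset.smul_sum, neg_smul]
      congr 1
      refine Finset.sum_congr rfl fun k _ => ?_
      rw [smul_smul]
    · refine Finset.sum_congr rfl fun j hj => ?_
      rw [if_neg (Finset.mem_erase.1 hj).1, smul_smul]
  rw [hL, hR, smul_smul]
  have e0 : (z - a i)⁻¹ * z⁻¹ = z⁻¹ * (0 - a i)⁻¹ + -((z - a i)⁻¹ * (0 - a i)⁻¹) := by
    field_simp
    ring
  have ej : ∀ j ∈ Finset.univ.erase i,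
      ((z - a i)⁻¹ * (z - a j)⁻¹) • C j
        = ((z - a j)⁻¹ * (a j - a i)⁻¹) • C j - ((z - a i)⁻¹ * (a j - a i)⁻¹) • C j := by
    intro j hj
    have hij := (Finset.mem_erase.1 hj).1
    have h1 : z - a j ≠ 0 := sub_ne_zero.2 (hz j)
    have h2 : a j - a i ≠ 0 := sub_ne_zero.2 (hne j hij)
    rw [← sub_smul]
    congr 1
    field_simp
    ring
  rw [e0, add_smul, Finset.sum_congr rfl ej, Finset.sum_sub_distrib, neg_smul]
  abel

lemma F1_iff {P n : ℕ} (a : Fin n → ℂ) (i : Fin n) (z : ℂ)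
    (hz0 : z ≠ 0) (hz : ∀ j, z ≠ a j) (hai : a i ≠ 0) (hne : ∀ j, j ≠ i → a j ≠ a i)
    (B : Fin n → (Fin n → ℂ) → Matrix (Fin P) (Fin P) ℂ)
    (B0 : (Fin n → ℂ) → Matrix (Fin P) (Fin P) ℂ)
    (hBd : ∀ j (r c : Fin P), DifferentiableAt ℂ (fun x => B j x r c) a)
    (hB0d : ∀ (r c : Fin P), DifferentiableAt ℂ (fun x => B0 x r c) a) :
    (zd (fun w => -((w - a i)⁻¹ • B i a)) z
        - pd i (fun x => (z - 0)⁻¹ • B0 x + ∑ j, (z - x j)⁻¹ • B j x) a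
      = ((z - 0)⁻¹ • B0 a + ∑ j, (z - a j)⁻¹ • B j a) * -((z - a i)⁻¹ • B i a)
        - -((z - a i)⁻¹ • B i a) * ((z - 0)⁻¹ • B0 a + ∑ j, (z - a j)⁻¹ • B j a))
    ↔ z⁻¹ • (pd i B0 a - (0 - a i)⁻¹ • matComm (B0 a) (B i a))
        + ∑ j, (z - a j)⁻¹ • (pd i (B j) a -
            (if j = i then
              -((0 - a i)⁻¹ • matComm (B0 a) (B i a))
                - ∑ k ∈ Finset.univ.erase i, (a k - a i)⁻¹ • matComm (B k a) (B i a)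
             else (a j - a i)⁻¹ • matComm (B j a) (B i a))) = 0 := by
  have hzi : z - a i ≠ 0 := sub_ne_zero.2 (hz i)
  have hzj : ∀ j, z - a j ≠ 0 := fun j => sub_ne_zero.2 (hz j)
  have hd1 : ∀ (r c : Fin P), DifferentiableAt ℂ (fun x => ((z - 0)⁻¹ • B0 x) r c) a := by
    intro r c
    have : (fun x => ((z - 0)⁻¹ • B0 x) r c) = fun x => (z - 0)⁻¹ * B0 x r c := by
      funext x; simp [Matrix.smul_apply]
    rw [this]
    exact (hB0d r c).const_mul _
  have hd2 : ∀ j (r c : Fin P),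
      DifferentiableAt ℂ (fun x => ((z - x j)⁻¹ • B j x) r c) a := by
    intro j r c
    have : (fun x => ((z - x j)⁻¹ • B j x) r c) = fun x => (z - x j)⁻¹ * B j x r c := by
      funext x; simp [Matrix.smul_apply]
    rw [this]
    exact ((hasFDerivAt_invsub j z a (hzj j)).differentiableAt).mul (hBd j r c)
  have hdsum : ∀ (r c : Fin P),
      DifferentiableAt ℂ (fun x => (∑ j, (z - x j)⁻¹ • B j x) r c) a := by
    intro r c
    have : (fun x => (∑ j, (z - x j)⁻¹ • B j x) r c)
        = fun x => ∑ j, ((z - x j)⁻¹ • B j x) r c := by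
      funext x; simp [Matrix.sum_apply]
    rw [this]
    exact DifferentiableAt.fun_sum fun j _ => hd2 j r c
  have h1 : zd (fun w => -((w - a i)⁻¹ • B i a)) z = ((z - a i) ^ 2)⁻¹ • B i a :=
    zd_neg_invsub_smul (a i) (B i a) z hzi
  have h2 : pd i (fun x => (z - 0)⁻¹ • B0 x + ∑ j, (z - x j)⁻¹ • B j x) a
      = (z - 0)⁻¹ • pd i B0 a + ∑ j, (z - a j)⁻¹ • pd i (B j) a
        + ((z - a i) ^ 2)⁻¹ • B i a := by
    rw [pd_add i _ _ a hd1 hdsum, pd_const_smul i _ _ a hB0d,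
      pd_sum i Finset.univ _ a (fun j _ => hd2 j)]
    have : ∀ j : Fin n, pd i (fun x => (z - x j)⁻¹ • B j x) a
        = (z - a j)⁻¹ • pd i (B j) a + (if i = j then ((z - a j) ^ 2)⁻¹ else 0) • B j a :=
      fun j => pd_invsub_smul i j z a (hzj j) (B j) (hBd j)
    rw [Finset.sum_congr rfl fun j _ => this j, Finset.sum_add_distrib]
    have hS2 : ∑ j, (if i = j then ((z - a j) ^ 2)⁻¹ else 0) • B j a
        = ((z - a i) ^ 2)⁻¹ • B i a := by
      simp_rw [ite_smul, zero_smul]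
      rw [Finset.sum_ite_eq]
      simp
    rw [hS2, ← add_assoc]
  set M : Matrix (Fin P) (Fin P) ℂ := (z - 0)⁻¹ • B0 a + ∑ j, (z - a j)⁻¹ • B j a with hM
  have hMB : M * B i a - B i a * M
      = z⁻¹ • matComm (B0 a) (B i a) + ∑ j, (z - a j)⁻¹ • matComm (B j a) (B i a) := by
    rw [hM, sub_zero, Matrix.add_mul, Matrix.mul_add, Matrix.smul_mul, Matrix.mul_smul,
      Finset.sum_mul, Matrix.mul_sum]
    simp_rw [Matrix.smul_mul, Matrix.mul_smul, matComm, smul_sub]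
    rw [Finset.sum_sub_distrib]
    abel
  have h3 : M * -((z - a i)⁻¹ • B i a) - -((z - a i)⁻¹ • B i a) * M
      = -(((z - a i)⁻¹ * z⁻¹) • matComm (B0 a) (B i a)
          + ∑ j, ((z - a i)⁻¹ * (z - a j)⁻¹) • matComm (B j a) (B i a)) := by
    have e1 : M * -((z - a i)⁻¹ • B i a) - -((z - a i)⁻¹ • B i a) * M
        = -((z - a i)⁻¹ • (M * B i a - B i a * M)) := by
      rw [Matrix.mul_neg, Matrix.neg_mul, Matrix.mul_smul, Matrix.smul_mul, smul_sub]
      abel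
    rw [e1, hMB, smul_add, smul_smul, Finset.smul_sum]
    simp_rw [smul_smul]
  rw [h1, h2, h3]
  have h4 : ((z - a i) ^ 2)⁻¹ • B i a
      - ((z - 0)⁻¹ • pd i B0 a + ∑ j, (z - a j)⁻¹ • pd i (B j) a
        + ((z - a i) ^ 2)⁻¹ • B i a)
      = -((z - 0)⁻¹ • pd i B0 a + ∑ j, (z - a j)⁻¹ • pd i (B j) a) := by abel
  rw [h4, neg_inj, sub_zero,
    pfrac a i z hz0 hz hai hne (matComm (B0 a) (B i a)) (fun j => matComm (B j a) (B i a))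
      (sub_self _)]
  have hD : z⁻¹ • (pd i B0 a - (0 - a i)⁻¹ • matComm (B0 a) (B i a))
        + ∑ j, (z - a j)⁻¹ • (pd i (B j) a -
            (if j = i then
              -((0 - a i)⁻¹ • matComm (B0 a) (B i a))
                - ∑ k ∈ Finset.univ.erase i, (a k - a i)⁻¹ • matComm (B k a) (B i a)
             else (a j - a i)⁻¹ • matComm (B j a) (B i a)))
      = (z⁻¹ • pd i B0 a + ∑ j, (z - a j)⁻¹ • pd i (B j) a)
        - (z⁻¹ • ((0 - a i)⁻¹ • matComm (B0 a) (B i a))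
          + ∑ j, (z - a j)⁻¹ •
            (if j = i then
              -((0 - a i)⁻¹ • matComm (B0 a) (B i a))
                - ∑ k ∈ Finset.univ.erase i, (a k - a i)⁻¹ • matComm (B k a) (B i a)
             else (a j - a i)⁻¹ • matComm (B j a) (B i a))) := by
    simp_rw [smul_sub]
    rw [Finset.sum_sub_distrib]
    abel
  rw [hD, sub_eq_zero]

/-- The typical case of Proposition 7: with `B_0 = C_1 = -Σ_{j=1}^n B_j`,
`a_0 = 0`, and `A(a,z) = Σ_{j=0}^n B_j(a)(z - a_j)^{-1}`,
`A_i(a,z) = -B_i(a)(z - a_i)^{-1}`, the zero-curvature conditions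
`dω¹ = ω¹ ∧ ω¹` are equivalent to the ordinary Schlesinger system (9). -/
theorem isomonodromic_deformation_typical_case
    {p n : ℕ} (hp : 1 ≤ p) (hn : 1 ≤ n)
    (W : Set (Fin n → ℂ)) (hWopen : IsOpen W)
    (hWdist : ∀ a ∈ W, Function.Injective a)
    (hWne : ∀ a ∈ W, ∀ i, a i ≠ 0)
    (B : Fin n → (Fin n → ℂ) → Matrix (Fin p) (Fin p) ℂ)
    (hB : ∀ i r c, DifferentiableOn ℂ (fun x => B i x r c) W)
    (B0 : (Fin n → ℂ) → Matrix (Fin p) (Fin p) ℂ)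
    (hB0 : B0 = fun a => -∑ j : Fin n, B j a)
    (A : (Fin n → ℂ) → ℂ → Matrix (Fin p) (Fin p) ℂ)
    (hA : A = fun a z =>
      (z - 0)⁻¹ • B0 a + ∑ j : Fin n, (z - a j)⁻¹ • B j a)
    (Ai : Fin n → (Fin n → ℂ) → ℂ → Matrix (Fin p) (Fin p) ℂ)
    (hAi : Ai = fun i a z => -((z - a i)⁻¹ • B i a)) :
    (∀ a ∈ W, ∀ z : ℂ, z ≠ 0 → (∀ j, z ≠ a j) →
        (∀ i : Fin n,
          zd (Ai i a) z - pd i (fun x => A x z) a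
            = A a z * Ai i a z - Ai i a z * A a z)
        ∧ (∀ i j : Fin n, i ≠ j →
          pd i (fun x => Ai j x z) a - pd j (fun x => Ai i x z) a
            = Ai i a z * Ai j a z - Ai j a z * Ai i a z))
      ↔ (∀ a ∈ W,
        -- the equation for `i = 0` (pole `a_0 = 0`) and any `m ∈ {1, …, n}`
        (∀ m : Fin n, pd m B0 a = (0 - a m)⁻¹ • matComm (B0 a) (B m a))
        -- the off-diagonal equations for `i, m ∈ {1, …, n}`, `i ≠ m`
        ∧ (∀ i m : Fin n, i ≠ m →
          pd m (B i) a = (a i - a m)⁻¹ • matComm (B i a) (B m a))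
        -- the diagonal equations for `i ∈ {1, …, n}`
        ∧ (∀ i : Fin n, pd i (B i) a
            = -((a i - 0)⁻¹ • matComm (B i a) (B0 a)
              + ∑ j ∈ Finset.univ.erase i, (a i - a j)⁻¹ • matComm (B i a) (B j a)))) := by
  simp only [hA, hAi]
  have hBd : ∀ a ∈ W, ∀ j (r c : Fin p), DifferentiableAt ℂ (fun x => B j x r c) a :=
    fun a ha j r c => (hB j r c).differentiableAt (hWopen.mem_nhds ha)
  have hB0d : ∀ a ∈ W, ∀ (r c : Fin p), DifferentiableAt ℂ (fun x => B0 x r c) a := by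
    intro a ha r c
    have : (fun x => B0 x r c) = fun x => -∑ j, B j x r c := by
      funext x; rw [hB0]; simp [Matrix.sum_apply]
    rw [this]
    exact (DifferentiableAt.fun_sum fun j _ => hBd a ha j r c).neg
  have hterm : ∀ a : Fin n → ℂ, ∀ i k : Fin n,
      (a i - a k)⁻¹ • matComm (B i a) (B k a)
        = (a k - a i)⁻¹ • matComm (B k a) (B i a) :=
    fun a i k => smul_matComm_comm _ _ (inv_sub_swap _ _) _ _
  have h0term : ∀ a : Fin n → ℂ, ∀ i : Fin n,
      (a i - 0)⁻¹ • matComm (B i a) (B0 a)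
        = (0 - a i)⁻¹ • matComm (B0 a) (B i a) :=
    fun a i => smul_matComm_comm _ _ (inv_sub_swap _ _) _ _
  constructor
  · intro hF a ha
    have hinj := hWdist a ha
    have h0 := hWne a ha
    have hne : ∀ i : Fin n, ∀ j, j ≠ i → a j ≠ a i := fun i j hj e => hj (hinj e)
    have hres : ∀ i : Fin n,
        (pd i B0 a - (0 - a i)⁻¹ • matComm (B0 a) (B i a) = 0)
        ∧ ∀ j, pd i (B j) a -
            (if j = i then
              -((0 - a i)⁻¹ • matComm (B0 a) (B i a))
                - ∑ k ∈ Finset.univ.erase i, (a k - a i)⁻¹ • matComm (B k a) (B i a)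
             else (a j - a i)⁻¹ • matComm (B j a) (B i a)) = 0 := by
      intro i
      exact residue_extract a hinj h0
        (pd i B0 a - (0 - a i)⁻¹ • matComm (B0 a) (B i a))
        (fun j => pd i (B j) a -
            (if j = i then
              -((0 - a i)⁻¹ • matComm (B0 a) (B i a))
                - ∑ k ∈ Finset.univ.erase i, (a k - a i)⁻¹ • matComm (B k a) (B i a)
             else (a j - a i)⁻¹ • matComm (B j a) (B i a)))
        (fun z hz0 hzj =>
          (F1_iff a i z hz0 hzj (h0 i) (hne i) B B0 (hBd a ha) (hB0d a ha)).mp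
            ((hF a ha z hz0 hzj).1 i))
    refine ⟨fun m => sub_eq_zero.1 (hres m).1, fun i m him => ?_, fun i => ?_⟩
    · have := (hres m).2 i
      rw [if_neg him] at this
      exact sub_eq_zero.1 this
    · have hGi := (hres i).2 i
      rw [if_pos rfl] at hGi
      rw [sub_eq_zero.1 hGi, h0term a i,
        Finset.sum_congr rfl (fun k _ => hterm a i k), neg_add, ← sub_eq_add_neg]
  · intro hS a ha z hz0 hzj
    obtain ⟨e1, e2, e3⟩ := hS a ha
    have hinj := hWdist a ha
    have h0 := hWne a ha
    have hne : ∀ i : Fin n, ∀ j, j ≠ i → a j ≠ a i := fun i j hj e => hj (hinj e)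
    constructor
    · intro i
      apply (F1_iff a i z hz0 hzj (h0 i) (hne i) B B0 (hBd a ha) (hB0d a ha)).mpr
      have hz1 : pd i B0 a - (0 - a i)⁻¹ • matComm (B0 a) (B i a) = 0 :=
        sub_eq_zero.2 (e1 i)
      have hz2 : ∀ j, pd i (B j) a -
          (if j = i then
            -((0 - a i)⁻¹ • matComm (B0 a) (B i a))
              - ∑ k ∈ Finset.univ.erase i, (a k - a i)⁻¹ • matComm (B k a) (B i a)
           else (a j - a i)⁻¹ • matComm (B j a) (B i a)) = 0 := by
        intro j
        by_cases hji : j = i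
        · subst hji
          rw [if_pos rfl]
          refine sub_eq_zero.2 ?_
          rw [e3 j, h0term a j,
            Finset.sum_congr rfl (fun k _ => hterm a j k), neg_add, ← sub_eq_add_neg]
        · rw [if_neg hji]
          exact sub_eq_zero.2 (e2 j i hji)
      rw [hz1, smul_zero, zero_add]
      exact Finset.sum_eq_zero fun j _ => by rw [hz2 j, smul_zero]
    · intro i j hij
      have hzi : z - a i ≠ 0 := sub_ne_zero.2 (hzj i)
      have hzjj : z - a j ≠ 0 := sub_ne_zero.2 (hzj j)
      have haij : a i - a j ≠ 0 := sub_ne_zero.2 (fun e => hij (hinj e))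
      rw [pd_neg i (fun x => (z - x j)⁻¹ • B j x) a,
        pd_neg j (fun x => (z - x i)⁻¹ • B i x) a,
        pd_invsub_smul i j z a hzjj (B j) (hBd a ha j),
        pd_invsub_smul j i z a hzi (B i) (hBd a ha i),
        if_neg hij, if_neg (Ne.symm hij)]
      simp only [zero_smul, add_zero]
      rw [e2 j i (Ne.symm hij), e2 i j hij, hterm a j i, neg_sub_neg,
        smul_smul, smul_smul, ← sub_smul]
      simp only [neg_mul_neg, Matrix.smul_mul, Matrix.mul_smul, smul_smul]
      rw [matComm, smul_sub]
      congr 1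
      · congr 1
        field_simp
        ring
      · congr 1
        field_simp
        ring
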